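/- arXiv:1506.06083 — 3 statements merged into one kernel-verified Lean document; each statement's English description precedes it below -/
import Mathlib

section
/- Let S be a subspace of ℝ^m with m ≥ n+1. Then S contains n+1 linearly independent vectors if and only if for every choice of n coordinate indices 1 ≤ j₁ < j₂ < ⋯ < jₙ ≤ m there exists a nonzero vector x ∈ S with x_{j₁} = x_{j₂} = ⋯ = x_{jₙ} = 0. -/
open Module

/-- Greedy lemma: a subspace of `ℝ^m` of dimension `≤ k` is pinned by some `≤ k`
coordinates. -/
lemma aux_pin (m : ℕ) : ∀ (k : ℕ) (T : Submodule ℝ (Fin m → ℝ)),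
    Module.finrank ℝ T ≤ k →
    ∃ J : Finset (Fin m), J.card ≤ k ∧ ∀ x ∈ T, (∀ j ∈ J, x j = 0) → x = 0 := by
  intro k
  induction k with
  | zero =>
    intro T hT
    refine ⟨∅, le_rfl, ?_⟩
    have : T = ⊥ := Submodule.finrank_eq_zero.mp (Nat.le_zero.mp hT)
    intro x hx _
    simpa [this] using hx
  | succ k ih =>
    intro T hT
    by_cases hbot : T = ⊥
    · refine ⟨∅, Nat.zero_le _, ?_⟩
      intro x hx _
      simpa [hbot] using hx
    · obtain ⟨x₀, hx₀T, hx₀⟩ := Submodule.ne_bot_iff T |>.mp hbot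
      obtain ⟨j₀, hj₀⟩ : ∃ j, x₀ j ≠ 0 := by
        by_contra h
        push_neg at h
        exact hx₀ (funext h)
      set T' := T ⊓ LinearMap.ker (LinearMap.proj j₀ : (Fin m → ℝ) →ₗ[ℝ] ℝ) with hT'
      have hlt : T' < T := by
        refine lt_of_le_of_ne inf_le_left ?_
        intro h
        have : x₀ ∈ T' := h ▸ hx₀T
        exact hj₀ this.2
      have hfr : Module.finrank ℝ T' < Module.finrank ℝ T :=
        Submodule.finrank_lt_finrank_of_lt hlt
      obtain ⟨J', hJ'card, hJ'⟩ := ih T' (by omega)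
      refine ⟨insert j₀ J', le_trans (Finset.card_insert_le _ _) (by omega), ?_⟩
      intro x hx hvan
      have hx' : x ∈ T' := ⟨hx, by simpa using hvan j₀ (Finset.mem_insert_self _ _)⟩
      exact hJ' x hx' fun j hj => hvan j (Finset.mem_insert_of_mem hj)

/-- A subspace `S` of `ℝ^m` (with `m ≥ n+1`) contains `n+1` linearly
independent vectors iff for every choice of `n` coordinate indices
`j₁ < j₂ < ⋯ < jₙ` there is a nonzero `x ∈ S` vanishing on those coordinates. -/
theorem stmt0 (m n : ℕ) (hm : n + 1 ≤ m) (S : Submodule ℝ (Fin m → ℝ)) :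
    (∃ v : Fin (n + 1) → (Fin m → ℝ), (∀ i, v i ∈ S) ∧ LinearIndependent ℝ v) ↔
      (∀ j : Fin n → Fin m, StrictMono j →
        ∃ x ∈ S, x ≠ 0 ∧ ∀ i, x (j i) = 0) := by
  constructor
  · rintro ⟨v, hvS, hv⟩ j hj
    -- dim S ≥ n+1
    have hw : LinearIndependent ℝ (fun i : Fin (n + 1) => (⟨v i, hvS i⟩ : S)) := by
      apply LinearIndependent.of_comp S.subtype
      exact hv
    have hrank : n + 1 ≤ Module.finrank ℝ S := by
      simpa using hw.fintype_card_le_finrank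
    -- projection S → ℝ^n
    let f : S →ₗ[ℝ] (Fin n → ℝ) :=
      { toFun := fun x i => (x : Fin m → ℝ) (j i)
        map_add' := fun x y => rfl
        map_smul' := fun c x => rfl }
    have hninj : ¬ Function.Injective f := by
      intro hinj
      have := LinearMap.finrank_le_finrank_of_injective hinj
      simp [Module.finrank_fintype_fun_eq_card] at this
      omega
    have hker : LinearMap.ker f ≠ ⊥ := by
      intro h
      exact hninj (LinearMap.ker_eq_bot.mp h)
    obtain ⟨⟨x, hxS⟩, hxker, hxne⟩ := Submodule.ne_bot_iff _ |>.mp hker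
    refine ⟨x, hxS, ?_, ?_⟩
    · intro h
      exact hxne (Subtype.ext h)
    · intro i
      have := congrFun (LinearMap.mem_ker.mp hxker) i
      simpa [f] using this
  · intro h
    by_contra hno
    -- then finrank S ≤ n
    have hrank : Module.finrank ℝ S ≤ n := by
      by_contra hr
      push_neg at hr
      have hr' : n + 1 ≤ Module.finrank ℝ S := hr
      let b := Module.finBasis ℝ S
      have hb : LinearIndependent ℝ (fun i : Fin (n + 1) => b (Fin.castLE hr' i)) :=
        b.linearIndependent.comp _ (Fin.castLE_injective hr')
      have hb' : LinearIndependent ℝ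
          (fun i : Fin (n + 1) => ((b (Fin.castLE hr' i) : S) : Fin m → ℝ)) :=
        hb.map' S.subtype S.ker_subtype
      exact hno ⟨_, fun i => (b (Fin.castLE hr' i)).2, hb'⟩
    obtain ⟨J, hJcard, hJ⟩ := aux_pin m n S hrank
    obtain ⟨J', hJJ', hJ'card⟩ := Finset.exists_superset_card_eq hJcard
      (by simpa using (by omega : n ≤ m))
    let e := J'.orderIsoOfFin hJ'card
    have hsm : StrictMono (fun i : Fin n => (e i : Fin m)) :=
      fun a b hab => e.strictMono hab
    obtain ⟨x, hxS, hxne, hxvan⟩ := h _ hsm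
    apply hxne
    apply hJ x hxS
    intro j hj
    have hj' : j ∈ J' := hJJ' hj
    obtain ⟨i, hi⟩ := e.surjective ⟨j, hj'⟩
    have : (e i : Fin m) = j := by rw [hi]
    rw [← this]
    exact hxvan i
end

section
/- Let M be a block-diagonal matrix over ℤ with diagonal blocks M₁, …, Mₙ (not necessarily square). Then det(M,k) = gcd over all tuples (k₁,…,kₙ) with k₁+⋯+kₙ = k of det(M₁,k₁)·det(M₂,k₂)⋯det(Mₙ,kₙ). -/
open Finset Matrix


lemma myGcd_nonneg {γ : Type*} (s : Finset γ) (f : γ → ℤ) : 0 ≤ s.gcd f := by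
  rw [← Finset.normalize_gcd, ← Int.abs_eq_normalize]; exact abs_nonneg _

lemma gcd_pi {ι : Type} [Fintype ι] [DecidableEq ι] {X : ι → Type} [∀ i, Fintype (X i)]
    [∀ i, Nonempty (X i)] (F : ∀ i, X i → ℤ) (t : Finset ι) :
    (univ : Finset (∀ i, X i)).gcd (fun x => ∏ i ∈ t, F i (x i)) =
      ∏ i ∈ t, (univ : Finset (X i)).gcd (F i) := by
  classical
  induction t using Finset.induction with
  | empty =>
      simp only [Finset.prod_empty]
      apply Int.dvd_antisymm (myGcd_nonneg _ _) zero_le_one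
      · exact Finset.gcd_dvd (mem_univ (Classical.arbitrary _))
      · exact one_dvd _
  | @insert a t ha ih =>
      rw [Finset.prod_insert ha]
      apply Int.dvd_antisymm (myGcd_nonneg _ _)
        (mul_nonneg (myGcd_nonneg _ _) (Finset.prod_nonneg fun i _ => myGcd_nonneg _ _))
      · -- hard direction
        set G : ℤ := (univ : Finset (∀ i, X i)).gcd (fun x => ∏ i ∈ t, F i (x i)) with hG
        have key : ∀ y : X a,
            ((univ : Finset (∀ i, X i)).gcd fun x => ∏ i ∈ insert a t, F i (x i)) ∣ F a y * G := by
          intro y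
          have h1 : ((univ : Finset (∀ i, X i)).gcd fun x => ∏ i ∈ insert a t, F i (x i)) ∣
              ((univ : Finset (∀ i, X i)).gcd fun x => F a y * ∏ i ∈ t, F i (x i)) := by
            apply Finset.dvd_gcd; intro x _
            have h2 : ((univ : Finset (∀ i, X i)).gcd fun x => ∏ i ∈ insert a t, F i (x i)) ∣
                ∏ i ∈ insert a t, F i (Function.update x a y i) :=
              Finset.gcd_dvd (Finset.mem_univ _)
            rw [Finset.prod_insert ha, Function.update_self] at h2
            have h3 : ∏ i ∈ t, F i (Function.update x a y i) = ∏ i ∈ t, F i (x i) :=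
              Finset.prod_congr rfl fun i hi => by
                rw [Function.update_of_ne (ne_of_mem_of_not_mem hi ha)]
            rwa [h3] at h2
          rw [Finset.gcd_mul_left] at h1
          exact h1.trans (mul_dvd_mul_right (normalize_dvd_iff.mpr dvd_rfl) _)
        have h2 : ((univ : Finset (∀ i, X i)).gcd fun x => ∏ i ∈ insert a t, F i (x i)) ∣
            (univ : Finset (X a)).gcd (fun y => G * F a y) := by
          apply Finset.dvd_gcd; intro y _
          exact (key y).trans (dvd_of_eq (mul_comm _ _))
        rw [Finset.gcd_mul_left, Int.normalize_of_nonneg (myGcd_nonneg _ _), ← hG, ih,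
          mul_comm] at h2
        exact h2
      · apply Finset.dvd_gcd; intro x _
        rw [Finset.prod_insert ha]
        exact mul_dvd_mul (Finset.gcd_dvd (mem_univ _))
          (Finset.prod_dvd_prod_of_dvd _ _ fun i _ => Finset.gcd_dvd (mem_univ _))


lemma det_blockDiagonal'_fin {n : ℕ} {κ : Fin n → ℕ}
    (C : ∀ i, Matrix (Fin (κ i)) (Fin (κ i)) ℤ) :
    (Matrix.blockDiagonal' C).det = ∏ i, (C i).det := by
  rw [(Matrix.blockTriangular_blockDiagonal' C).det_fintype]
  refine Finset.prod_congr rfl fun i _ => ?_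
  let e : Fin (κ i) ≃ {x : Σ j, Fin (κ j) // x.1 = i} :=
    { toFun := fun a => ⟨⟨i, a⟩, rfl⟩
      invFun := fun x => x.prop ▸ x.val.2
      left_inv := fun a => rfl
      right_inv := by rintro ⟨⟨j, b⟩, h⟩; subst h; rfl }
  rw [← Matrix.det_submatrix_equiv_self e]
  congr 1
  ext a b
  show blockDiagonal' C ⟨i, a⟩ ⟨i, b⟩ = C i a b
  exact Matrix.blockDiagonal'_apply_eq C i a b

lemma det_eq_zero_pigeon {k : ℕ} (N : Matrix (Fin k) (Fin k) ℤ) (R C : Finset (Fin k))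
    (hcard : C.card < R.card) (hz : ∀ a ∈ R, ∀ b ∉ C, N a b = 0) : N.det = 0 := by
  rw [Matrix.det_apply]
  apply Finset.sum_eq_zero
  intro σ _
  have hc : (univ.filter fun b => σ b ∈ R).card = R.card := by
    apply Finset.card_bij' (fun b _ => σ b) (fun a _ => σ.symm a)
    · intro b hb; exact (Finset.mem_filter.mp hb).2
    · intro a ha; simp [ha]
    · intro b _; simp
    · intro a _; simp
  have : ¬ (univ.filter fun b => σ b ∈ R) ⊆ C := fun hsub =>
    absurd (Finset.card_le_card hsub) (by omega)
  obtain ⟨b, hbR, hbC⟩ := Finset.not_subset.mp this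
  have : ∏ i, N (σ i) i = 0 :=
    Finset.prod_eq_zero (Finset.mem_univ b) (hz (σ b) (Finset.mem_filter.mp hbR).2 b hbC)
  rw [this, smul_zero]

/-- `det(M, k)`: the gcd of all `k × k` minors of `M`. -/
def minorGcd {α β : Type} [Fintype α] [Fintype β] (M : Matrix α β ℤ) (k : ℕ) : ℤ :=
  Finset.univ.gcd fun fg : (Fin k → α) × (Fin k → β) => (M.submatrix fg.1 fg.2).det





lemma dir1 (n k : ℕ) (r s : Fin n → ℕ) (B : ∀ i, Matrix (Fin (r i)) (Fin (s i)) ℤ)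
    (κ : Fin n → ℕ) (hκ : ∑ i, κ i = k) :
    minorGcd (Matrix.blockDiagonal' B) k ∣ ∏ i, minorGcd (B i) (κ i) := by
  by_cases hne : ∀ i, Nonempty ((Fin (κ i) → Fin (r i)) × (Fin (κ i) → Fin (s i)))
  · simp only [minorGcd]
    rw [← gcd_pi (X := fun i => (Fin (κ i) → Fin (r i)) × (Fin (κ i) → Fin (s i)))
      (F := fun i fg => ((B i).submatrix fg.1 fg.2).det) Finset.univ]
    apply Finset.dvd_gcd
    intro x _
    have card : Fintype.card (Σ i, Fin (κ i)) = k := by simp [hκ]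
    let e : Fin k ≃ Σ i, Fin (κ i) := (Fintype.equivFinOfCardEq card).symm
    let f : Fin k → Σ i, Fin (r i) := fun j => ⟨(e j).1, (x (e j).1).1 (e j).2⟩
    let g : Fin k → Σ i, Fin (s i) := fun j => ⟨(e j).1, (x (e j).1).2 (e j).2⟩
    have hM : (Matrix.blockDiagonal' B).submatrix f g =
        (Matrix.blockDiagonal' (fun i => (B i).submatrix (x i).1 (x i).2)).submatrix e e := by
      ext j1 j2
      simp only [Matrix.submatrix_apply]
      show Matrix.blockDiagonal' B ⟨(e j1).1, (x (e j1).1).1 (e j1).2⟩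
          ⟨(e j2).1, (x (e j2).1).2 (e j2).2⟩ =
        Matrix.blockDiagonal' (fun i => (B i).submatrix (x i).1 (x i).2) (e j1) (e j2)
      generalize e j1 = p
      generalize e j2 = q
      rcases p with ⟨i1, a⟩
      rcases q with ⟨i2, b⟩
      by_cases h : i1 = i2
      · subst h; rfl
      · rw [Matrix.blockDiagonal'_apply_ne _ _ _ h, Matrix.blockDiagonal'_apply_ne _ _ _ h]
    have h1 : ((Matrix.blockDiagonal' B).submatrix f g).det ∣ _ := dvd_rfl
    have h2 : (Finset.univ.gcd fun fg : (Fin k → Σ i, Fin (r i)) × (Fin k → Σ i, Fin (s i)) =>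
        ((Matrix.blockDiagonal' B).submatrix fg.1 fg.2).det) ∣
        ((Matrix.blockDiagonal' B).submatrix f g).det :=
      Finset.gcd_dvd (Finset.mem_univ (f, g))
    rwa [hM, Matrix.det_submatrix_equiv_self, det_blockDiagonal'_fin] at h2
  · push_neg at hne
    obtain ⟨i, hi⟩ := hne
    have : IsEmpty ((Fin (κ i) → Fin (r i)) × (Fin (κ i) → Fin (s i))) :=
      hi
    have hz : minorGcd (B i) (κ i) = 0 := by
      rw [minorGcd, Finset.univ_eq_empty, Finset.gcd_empty]
    rw [Finset.prod_eq_zero (Finset.mem_univ i) hz]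
    exact dvd_zero _





lemma dir2 (n k : ℕ) (r s : Fin n → ℕ) (B : ∀ i, Matrix (Fin (r i)) (Fin (s i)) ℤ)
    (f : Fin k → Σ i, Fin (r i)) (g : Fin k → Σ i, Fin (s i)) :
    (((Finset.univ : Finset (Fin n → Fin (k + 1))).filter
          fun κ => ∑ i, (κ i : ℕ) = k).gcd
        fun κ => ∏ i, minorGcd (B i) (κ i)) ∣
      ((Matrix.blockDiagonal' B).submatrix f g).det := by
  classical
  set κr : Fin n → ℕ := fun i => (Finset.univ.filter fun j => (f j).1 = i).card with hκr
  set κc : Fin n → ℕ := fun i => (Finset.univ.filter fun j => (g j).1 = i).card with hκc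
  have hr : ∑ i, κr i = k := by
    rw [hκr, ← Finset.card_eq_sum_card_fiberwise (fun x _ => Finset.mem_univ ((f x).1))]
    simp
  have hc : ∑ i, κc i = k := by
    rw [hκc, ← Finset.card_eq_sum_card_fiberwise (fun x _ => Finset.mem_univ ((g x).1))]
    simp
  by_cases hcase : κr = κc
  · -- equal fiber counts: true block structure
    have cardr : ∀ i, Fintype.card {j // (f j).1 = i} = κr i := fun i => by
      rw [Fintype.card_subtype]
    have cardc : ∀ i, Fintype.card {j // (g j).1 = i} = κr i := fun i => by
      rw [Fintype.card_subtype, hcase]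
    let er : (Σ i, Fin (κr i)) ≃ Fin k :=
      (Equiv.sigmaCongrRight fun i => (Fintype.equivFinOfCardEq (cardr i)).symm).trans
        (Equiv.sigmaFiberEquiv fun j => (f j).1)
    let ec : (Σ i, Fin (κr i)) ≃ Fin k :=
      (Equiv.sigmaCongrRight fun i => (Fintype.equivFinOfCardEq (cardc i)).symm).trans
        (Equiv.sigmaFiberEquiv fun j => (g j).1)
    have her : ∀ p : Σ i, Fin (κr i), (f (er p)).1 = p.1 := by
      rintro ⟨i, a⟩
      exact ((Fintype.equivFinOfCardEq (cardr i)).symm a).prop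
    have hec : ∀ p : Σ i, Fin (κr i), (g (ec p)).1 = p.1 := by
      rintro ⟨i, a⟩
      exact ((Fintype.equivFinOfCardEq (cardc i)).symm a).prop
    let ρ : ∀ i, Fin (κr i) → Fin (r i) := fun i a =>
      cast (congrArg (fun t => Fin (r t)) (her ⟨i, a⟩)) (f (er ⟨i, a⟩)).2
    let γ : ∀ i, Fin (κr i) → Fin (s i) := fun i a =>
      cast (congrArg (fun t => Fin (s t)) (hec ⟨i, a⟩)) (g (ec ⟨i, a⟩)).2
    have hf : ∀ i (a : Fin (κr i)), f (er ⟨i, a⟩) = ⟨i, ρ i a⟩ := fun i a =>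
      Sigma.ext (her ⟨i, a⟩) ((cast_heq _ _).symm)
    have hg : ∀ i (a : Fin (κr i)), g (ec ⟨i, a⟩) = ⟨i, γ i a⟩ := fun i a =>
      Sigma.ext (hec ⟨i, a⟩) ((cast_heq _ _).symm)
    let C : ∀ i, Matrix (Fin (κr i)) (Fin (κr i)) ℤ := fun i => (B i).submatrix (ρ i) (γ i)
    have hM : Matrix.blockDiagonal' C =
        ((Matrix.blockDiagonal' B).submatrix f g).submatrix er ec := by
      ext p q
      rcases p with ⟨i1, a⟩
      rcases q with ⟨i2, b⟩
      simp only [Matrix.submatrix_apply]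
      rw [hf, hg]
      by_cases h : i1 = i2
      · subst h
        rw [Matrix.blockDiagonal'_apply_eq, Matrix.blockDiagonal'_apply_eq]
        rfl
      · rw [Matrix.blockDiagonal'_apply_ne _ _ _ h, Matrix.blockDiagonal'_apply_ne _ _ _ h]
    -- determinant relation
    let τ : Equiv.Perm (Σ i, Fin (κr i)) := ec.trans er.symm
    have hsub : ((Matrix.blockDiagonal' B).submatrix f g).submatrix er ec =
        (((Matrix.blockDiagonal' B).submatrix f g).submatrix er er).submatrix id τ := by
      ext p q
      simp [τ]
    have hdet : (Matrix.blockDiagonal' C).det =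
        (Equiv.Perm.sign τ : ℤ) * ((Matrix.blockDiagonal' B).submatrix f g).det := by
      rw [hM, hsub, Matrix.det_permute', Matrix.det_submatrix_equiv_self]
      norm_cast
    -- divisibility chain
    have hle : ∀ i, κr i ≤ k := by
      intro i
      rw [← hr]
      exact Finset.single_le_sum (fun j _ => Nat.zero_le _) (Finset.mem_univ i)
    let κ' : Fin n → Fin (k + 1) := fun i => ⟨κr i, Nat.lt_succ_of_le (hle i)⟩
    have hmem : κ' ∈ (Finset.univ : Finset (Fin n → Fin (k + 1))).filter
        fun κ => ∑ i, (κ i : ℕ) = k := Finset.mem_filter.mpr ⟨Finset.mem_univ _, hr⟩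
    have h1' := Finset.gcd_dvd hmem
      (f := fun κ : Fin n → Fin (k + 1) => ∏ i, minorGcd (B i) (κ i))
    have heqp : (∏ i, minorGcd (B i) ((κ' i : ℕ))) = ∏ i, minorGcd (B i) (κr i) :=
      Finset.prod_congr rfl fun i _ => by norm_num [κ']
    replace h1' : _ ∣ ∏ i, minorGcd (B i) ((κ' i : ℕ)) := h1'
    rw [heqp] at h1'
    have h1 := h1'
    have h2 : (∏ i, minorGcd (B i) (κr i)) ∣ ∏ i, (C i).det :=
      Finset.prod_dvd_prod_of_dvd _ _ fun i _ => Finset.gcd_dvd (Finset.mem_univ (ρ i, γ i))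
    have h3 := (h1.trans h2).trans (dvd_of_eq (det_blockDiagonal'_fin C).symm)
    rw [hdet] at h3
    rcases Int.units_eq_one_or (Equiv.Perm.sign τ) with h | h <;> rw [h] at h3 <;>
      simpa using h3
  · -- unequal counts: determinant is zero
    have hex : ∃ i, κc i < κr i := by
      by_contra h
      push_neg at h
      exact hcase (funext fun i =>
        (Finset.sum_eq_sum_iff_of_le fun i _ => h i).mp (hr.trans hc.symm) i (Finset.mem_univ i))
    obtain ⟨i, hi⟩ := hex
    have hz : ((Matrix.blockDiagonal' B).submatrix f g).det = 0 := by
      apply det_eq_zero_pigeon _ (Finset.univ.filter fun j => (f j).1 = i)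
        (Finset.univ.filter fun j => (g j).1 = i) hi
      intro a ha b hb
      simp only [Finset.mem_filter, Finset.mem_univ, true_and] at ha hb
      simp only [Matrix.submatrix_apply]
      exact Matrix.blockDiagonal'_apply_ne _ _ _ (by rw [ha]; exact fun hh => hb hh.symm)
    rw [hz]
    exact dvd_zero _

/-- For a block-diagonal matrix with (not necessarily square)
diagonal blocks `B 1, …, B n`, `det(M, k)` equals the gcd over all tuples
`(k₁, …, kₙ)` with `k₁ + ⋯ + kₙ = k` of `det(B 1, k₁) ⋯ det(B n, kₙ)`. -/
theorem stmt6 (n k : ℕ) (r s : Fin n → ℕ)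
    (B : ∀ i, Matrix (Fin (r i)) (Fin (s i)) ℤ) :
    minorGcd (Matrix.blockDiagonal' B) k =
      ((Finset.univ : Finset (Fin n → Fin (k + 1))).filter
          fun κ => ∑ i, (κ i : ℕ) = k).gcd
        fun κ => ∏ i, minorGcd (B i) (κ i) := by
  apply Int.dvd_antisymm (by rw [minorGcd]; exact myGcd_nonneg _ _) (myGcd_nonneg _ _)
  · apply Finset.dvd_gcd
    intro κ hκ
    exact dir1 n k r s B (fun i => (κ i : ℕ)) (Finset.mem_filter.mp hκ).2
  · rw [minorGcd]
    apply Finset.dvd_gcd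
    intro fg _
    exact dir2 n k r s B fg.1 fg.2
end

section
/- Let G be the semidirect product ℤ/p ⋊ ℤ/m where p is prime and the generator of ℤ/m acts by multiplication by k with k of multiplicative order m modulo p and m > 1. If H is a subgroup of G whose projection to ℤ/m is surjective and which contains two distinct elements with the same ℤ/m-component, then H = G. -/
/-- Let `G = (ℤ/p) ⋊ (ℤ/m)` with `p` prime, `m > 1`, the
generator of `ℤ/m` acting by multiplication by `k` where `k` has
multiplicative order `m` mod `p`. If a subgroup `H` of `G` projects onto
`ℤ/m` and contains two distinct elements with the same `ℤ/m`-component,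
then `H = G`. -/
theorem stmt11 (p m k : ℕ) [Fact p.Prime] (hm : 1 < m)
    (hk : orderOf (k : ZMod p) = m)
    (φ : Multiplicative (ZMod m) →* MulAut (Multiplicative (ZMod p)))
    (hφ : ∀ x : ZMod p,
      (φ (Multiplicative.ofAdd (1 : ZMod m)) (Multiplicative.ofAdd x)).toAdd =
        (k : ZMod p) * x)
    (H : Subgroup (Multiplicative (ZMod p) ⋊[φ] Multiplicative (ZMod m)))
    (hsurj : ∀ b : Multiplicative (ZMod m), ∃ g ∈ H, g.right = b)
    (htwo : ∃ g ∈ H, ∃ g' ∈ H, g ≠ g' ∧ g.right = g'.right) :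
    H = ⊤ := by
  obtain ⟨g, hg, g', hg', hne, hr⟩ := htwo
  set h := g * g'⁻¹ with hh
  have hH : h ∈ H := H.mul_mem hg (H.inv_mem hg')
  have hright : h.right = 1 := by
    simp [hh, hr]
  have hne1 : h ≠ 1 := by
    intro h1
    exact hne (mul_inv_eq_one.mp h1)
  have hleft : h.left ≠ 1 := by
    intro hl
    exact hne1 (SemidirectProduct.ext hl (by simpa using hright))
  set x := Multiplicative.toAdd h.left with hxdef
  have hx0 : x ≠ 0 := by
    intro h0
    apply hleft
    have : Multiplicative.ofAdd x = Multiplicative.ofAdd 0 := congrArg _ h0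
    simpa [hxdef] using this
  have hhinl : h = SemidirectProduct.inl h.left := by
    ext
    · simp
    · simpa using hright
  -- every inl element is in H
  have key : ∀ y : ZMod p,
      SemidirectProduct.inl (Multiplicative.ofAdd y) ∈ H := by
    intro y
    obtain ⟨n, hn⟩ := ZMod.natCast_zmod_surjective (n := p) (y * x⁻¹)
    have hpow : h ^ n ∈ H := pow_mem hH n
    have hcalc : h ^ n = SemidirectProduct.inl (Multiplicative.ofAdd y) := by
      rw [hhinl, ← map_pow]
      congr 1
      have h1 : h.left = Multiplicative.ofAdd x := by simp [hxdef]
      rw [h1, ← ofAdd_nsmul]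
      congr 1
      rw [nsmul_eq_mul, hn]
      field_simp
    rwa [hcalc] at hpow
  -- every inr element is in H
  have keyr : ∀ b : Multiplicative (ZMod m), SemidirectProduct.inr b ∈ H := by
    intro b
    obtain ⟨w, hw, hwb⟩ := hsurj b
    have h1 : SemidirectProduct.inl w.left ∈ H := by
      have := key (Multiplicative.toAdd w.left)
      simpa using this
    have h2 : (SemidirectProduct.inl w.left)⁻¹ * w ∈ H := H.mul_mem (H.inv_mem h1) hw
    have h3 : (SemidirectProduct.inl w.left)⁻¹ * w = SemidirectProduct.inr b := by
      rw [← map_inv]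
      ext
      · simp [SemidirectProduct.mul_left]
      · simp [SemidirectProduct.mul_right, hwb]
    rwa [h3] at h2
  ext g₀
  simp only [Subgroup.mem_top, iff_true]
  rw [← SemidirectProduct.inl_left_mul_inr_right g₀]
  refine H.mul_mem ?_ (keyr _)
  have := key (Multiplicative.toAdd g₀.left)
  simpa using this
end
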